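/- Let (X_1, …, X_n) and (Y_{n+1}, …, Y_{n+m}) be two independent random vectors with positive integrable coordinates, let S_X := X_1 + ⋯ + X_n, S_Y := Y_{n+1} + ⋯ + Y_{n+m}, S_+ := S_X + S_Y, and suppose that for all i ≠ j in {1,…,n} and all t > 0, 𝔼[X_i e^{−tS_X}]/𝔼[X_i] = 𝔼[X_j e^{−tS_X}]/𝔼[X_j], and for all i ≠ j in {n+1,…,n+m} and all t > 0, 𝔼[Y_i e^{−tS_Y}]/𝔼[Y_i] = 𝔼[Y_j e^{−tS_Y}]/𝔼[Y_j]. Denote the merged portfolio coordinates by Z_1, …, Z_{n+m}. Then [for all i ≠ j in {1,…,n+m} and all t > 0, 𝔼[Z_i e^{−tS_+}]/𝔼[Z_i] = 𝔼[Z_j e^{−tS_+}]/𝔼[Z_j]] holds if and only if for all i ∈ {1,…,n}, j ∈ {n+1,…,n+m} and all t > 0, (𝔼[X_i e^{−tS_X}]/𝔼[X_i]) · 𝔼[e^{−tS_Y}] = (𝔼[Y_j e^{−tS_Y}]/𝔼[Y_j]) · 𝔼[e^{−tS_X}]. -/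

import Mathlib

open MeasureTheory Set

lemma indep_key_aux {Ω : Type*} [MeasurableSpace Ω] (μ : Measure Ω) [IsProbabilityMeasure μ]
    {n m : ℕ} {X : Fin n → Ω → ℝ} {Y : Fin m → Ω → ℝ}
    (hXmeas : ∀ i, Measurable (X i)) (hYmeas : ∀ j, Measurable (Y j))
    (hindep : ProbabilityTheory.IndepFun
      (fun ω => fun i => X i ω) (fun ω => fun j => Y j ω) μ)
    (i : Fin n) (t : ℝ) :
    ∫ ω, X i ω * Real.exp (-t * ((∑ k, X k ω) + (∑ k, Y k ω))) ∂μ =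
      (∫ ω, X i ω * Real.exp (-t * ∑ k, X k ω) ∂μ) *
        ∫ ω, Real.exp (-t * ∑ k, Y k ω) ∂μ := by
  set U : Ω → ℝ := fun ω => X i ω * Real.exp (-t * ∑ k, X k ω) with hU
  set V : Ω → ℝ := fun ω => Real.exp (-t * ∑ k, Y k ω) with hV
  have hF : Measurable (fun v : Fin n → ℝ => v i * Real.exp (-t * ∑ k, v k)) :=
    (measurable_pi_apply i).mul
      ((measurable_const.mul (Finset.measurable_sum _ fun k _ => measurable_pi_apply k)).exp)
  have hG : Measurable (fun v : Fin m → ℝ => Real.exp (-t * ∑ k, v k)) :=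
    (measurable_const.mul (Finset.measurable_sum _ fun k _ => measurable_pi_apply k)).exp
  have hUV : ProbabilityTheory.IndepFun U V μ := hindep.comp hF hG
  have hUm : Measurable U := (hXmeas i).mul
    ((measurable_const.mul (Finset.measurable_sum _ fun k _ => hXmeas k)).exp)
  have hVm : Measurable V :=
    (measurable_const.mul (Finset.measurable_sum _ fun k _ => hYmeas k)).exp
  calc ∫ ω, X i ω * Real.exp (-t * ((∑ k, X k ω) + (∑ k, Y k ω))) ∂μ
      = ∫ ω, U ω * V ω ∂μ := by
        refine integral_congr_ae (Filter.Eventually.of_forall fun ω => ?_)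
        simp only [hU, hV, mul_add, Real.exp_add]
        ring
    _ = _ := hUV.integral_fun_mul_eq_mul_integral hUm.aestronglyMeasurable hVm.aestronglyMeasurable

/-- Merging two independent portfolios, each in `𝔚` (expressed via equality of the Laplace
transforms of their partially size-biased aggregates): the merged portfolio is in `𝔚` iff the
cross-portfolio Laplace compatibility condition holds. -/
theorem merged_mem_W_iff_laplace_ratio
    {Ω : Type*} [MeasurableSpace Ω] (μ : Measure Ω) [IsProbabilityMeasure μ]
    (n m : ℕ) (X : Fin n → Ω → ℝ) (Y : Fin m → Ω → ℝ)
    (hXmeas : ∀ i, Measurable (X i)) (hYmeas : ∀ j, Measurable (Y j))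
    (hXpos : ∀ i ω, 0 < X i ω) (hYpos : ∀ j ω, 0 < Y j ω)
    (hXint : ∀ i, Integrable (X i) μ) (hYint : ∀ j, Integrable (Y j) μ)
    (hindep : ProbabilityTheory.IndepFun
      (fun ω => fun i => X i ω) (fun ω => fun j => Y j ω) μ)
    (SX SY Splus : Ω → ℝ)
    (hSX : SX = fun ω => ∑ i, X i ω) (hSY : SY = fun ω => ∑ j, Y j ω)
    (hSplus : Splus = fun ω => SX ω + SY ω)
    (hXW : ∀ i j, i ≠ j → ∀ t : ℝ, 0 < t →
      (∫ ω, X i ω * Real.exp (-t * SX ω) ∂μ) / (∫ ω, X i ω ∂μ) =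
        (∫ ω, X j ω * Real.exp (-t * SX ω) ∂μ) / (∫ ω, X j ω ∂μ))
    (hYW : ∀ i j, i ≠ j → ∀ t : ℝ, 0 < t →
      (∫ ω, Y i ω * Real.exp (-t * SY ω) ∂μ) / (∫ ω, Y i ω ∂μ) =
        (∫ ω, Y j ω * Real.exp (-t * SY ω) ∂μ) / (∫ ω, Y j ω ∂μ))
    (Z : Fin (n + m) → Ω → ℝ) (hZ : Z = Fin.append X Y) :
    (∀ i j : Fin (n + m), i ≠ j → ∀ t : ℝ, 0 < t →
        (∫ ω, Z i ω * Real.exp (-t * Splus ω) ∂μ) / (∫ ω, Z i ω ∂μ) =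
          (∫ ω, Z j ω * Real.exp (-t * Splus ω) ∂μ) / (∫ ω, Z j ω ∂μ)) ↔
      (∀ (i : Fin n) (j : Fin m), ∀ t : ℝ, 0 < t →
        ((∫ ω, X i ω * Real.exp (-t * SX ω) ∂μ) / (∫ ω, X i ω ∂μ)) *
            (∫ ω, Real.exp (-t * SY ω) ∂μ) =
          ((∫ ω, Y j ω * Real.exp (-t * SY ω) ∂μ) / (∫ ω, Y j ω ∂μ)) *
            (∫ ω, Real.exp (-t * SX ω) ∂μ)) := by
  subst hSplus hSX hSY hZ
  have keyX : ∀ (i : Fin n) (t : ℝ),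
      ∫ ω, X i ω * Real.exp (-t * ((∑ k, X k ω) + (∑ k, Y k ω))) ∂μ =
        (∫ ω, X i ω * Real.exp (-t * ∑ k, X k ω) ∂μ) *
          ∫ ω, Real.exp (-t * ∑ k, Y k ω) ∂μ :=
    fun i t => indep_key_aux μ hXmeas hYmeas hindep i t
  have keyY : ∀ (j : Fin m) (t : ℝ),
      ∫ ω, Y j ω * Real.exp (-t * ((∑ k, X k ω) + (∑ k, Y k ω))) ∂μ =
        (∫ ω, Y j ω * Real.exp (-t * ∑ k, Y k ω) ∂μ) *
          ∫ ω, Real.exp (-t * ∑ k, X k ω) ∂μ := by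
    intro j t
    calc ∫ ω, Y j ω * Real.exp (-t * ((∑ k, X k ω) + (∑ k, Y k ω))) ∂μ
        = ∫ ω, Y j ω * Real.exp (-t * ((∑ k, Y k ω) + (∑ k, X k ω))) ∂μ := by
          refine integral_congr_ae (Filter.Eventually.of_forall fun ω => ?_)
          ring_nf
      _ = _ := indep_key_aux μ hYmeas hXmeas hindep.symm j t
  constructor
  · intro h i j t ht
    have hne : Fin.castAdd m i ≠ Fin.natAdd n j := by
      intro he
      have h1 := congrArg Fin.val he
      simp only [Fin.coe_castAdd, Fin.coe_natAdd] at h1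
      have := i.isLt
      omega
    have h1 := h (Fin.castAdd m i) (Fin.natAdd n j) hne t ht
    simp only [Fin.append_left, Fin.append_right] at h1
    rw [keyX i t, keyY j t, mul_div_right_comm, mul_div_right_comm] at h1
    exact h1
  · intro h i j hij t ht
    induction i using Fin.addCases with
    | left i0 =>
      induction j using Fin.addCases with
      | left j0 =>
        have hne : i0 ≠ j0 := fun he => hij (by rw [he])
        simp only [Fin.append_left]
        rw [keyX i0 t, keyX j0 t, mul_div_right_comm, mul_div_right_comm,
          hXW i0 j0 hne t ht]
      | right j0 =>
        simp only [Fin.append_left, Fin.append_right]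
        rw [keyX i0 t, keyY j0 t, mul_div_right_comm, mul_div_right_comm]
        exact h i0 j0 t ht
    | right i0 =>
      induction j using Fin.addCases with
      | left j0 =>
        simp only [Fin.append_left, Fin.append_right]
        rw [keyX j0 t, keyY i0 t, mul_div_right_comm, mul_div_right_comm]
        exact (h j0 i0 t ht).symm
      | right j0 =>
        have hne : i0 ≠ j0 := fun he => hij (by rw [he])
        simp only [Fin.append_right]
        rw [keyY i0 t, keyY j0 t, mul_div_right_comm, mul_div_right_comm,
          hYW i0 j0 hne t ht]
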